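/- Let T > 0, M0 > 0, and let u be a classical solution of problem (B) on [-1,1]×[0,T] with initial data u0 satisfying 1 ≤ u0(x) ≤ M0 on [-1,1]. Suppose h_T > 0 satisfies h_T > φ(1;h_T) + (π/2)·T + M0, where φ(x;h) := -(1/arctan h)·ln(cos((arctan h)·x)). Then u(x,t) ≤ φ(x;h_T) + (arctan h_T)·t + M0 ≤ φ(1;h_T) + M0 + (π/2)·T for all x ∈ [-1,1] and t ∈ [0,T]. -/

import Mathlib

open Real

/-- Partial derivative in `x` of a function `u(x,t)`. -/
noncomputable def ux (u : ℝ → ℝ → ℝ) (x t : ℝ) : ℝ := deriv (fun y => u y t) x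

/-- Second partial derivative in `x` of a function `u(x,t)`. -/
noncomputable def uxx (u : ℝ → ℝ → ℝ) (x t : ℝ) : ℝ := deriv (fun y => ux u y t) x

/-- Partial derivative in `t` of a function `u(x,t)`. -/
noncomputable def ut (u : ℝ → ℝ → ℝ) (x t : ℝ) : ℝ := deriv (fun s => u x s) t

/-- A classical solution of problem (B) on `[-1,1] × [0,T]` with initial data `u0`:
`u` and `u_x` are continuous on the closed rectangle, `u` is `C^{2,1}` in
`(-1,1) × (0,T]` where it satisfies `u_t = u_xx/(1+u_x²)`, with boundary
conditions `u_x(±1,t) = ±u(±1,t)` and initial condition `u(·,0) = u0`. -/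
def IsClassicalSolB (u : ℝ → ℝ → ℝ) (u0 : ℝ → ℝ) (T : ℝ) : Prop :=
  ContinuousOn (fun p : ℝ × ℝ => u p.1 p.2) (Set.Icc (-1 : ℝ) 1 ×ˢ Set.Icc (0 : ℝ) T) ∧
  ContinuousOn (fun p : ℝ × ℝ => ux u p.1 p.2) (Set.Icc (-1 : ℝ) 1 ×ˢ Set.Icc (0 : ℝ) T) ∧
  (∀ t ∈ Set.Ioc (0 : ℝ) T, ∀ x ∈ Set.Ioo (-1 : ℝ) 1,
    DifferentiableAt ℝ (fun y => u y t) x ∧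
    DifferentiableAt ℝ (fun y => ux u y t) x ∧
    DifferentiableAt ℝ (fun s => u x s) t ∧
    ut u x t = uxx u x t / (1 + ux u x t ^ 2)) ∧
  (∀ t ∈ Set.Ioc (0 : ℝ) T, ux u 1 t = u 1 t ∧ ux u (-1) t = - u (-1) t) ∧
  (∀ x ∈ Set.Icc (-1 : ℝ) 1, u x 0 = u0 x)

section Aux
open Set Topology Filter

private lemma phi_hasDerivAt {c x : ℝ} (hc : c ≠ 0) (hx : Real.cos (c * x) ≠ 0) :
    HasDerivAt (fun y : ℝ => -(1 / c) * Real.log (Real.cos (c * y))) (Real.tan (c * x)) x := by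
  have h1 : HasDerivAt (fun y : ℝ => c * y) c x := by
    simpa using (hasDerivAt_id x).const_mul c
  have h2 : HasDerivAt (fun y : ℝ => Real.cos (c * y)) (-Real.sin (c * x) * c) x :=
    (Real.hasDerivAt_cos (c * x)).comp x h1
  have h3 := (h2.log hx).const_mul (-(1 / c))
  refine h3.congr_deriv ?_
  rw [Real.tan_eq_sin_div_cos]
  field_simp

private lemma tanc_hasDerivAt {c x : ℝ} (hx : Real.cos (c * x) ≠ 0) :
    HasDerivAt (fun y : ℝ => Real.tan (c * y)) (c * (1 + Real.tan (c * x) ^ 2)) x := by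
  have h1 : HasDerivAt (fun y : ℝ => c * y) c x := by
    simpa using (hasDerivAt_id x).const_mul c
  have h2 := (Real.hasDerivAt_tan hx).comp x h1
  refine h2.congr_deriv ?_
  rw [Real.tan_eq_sin_div_cos]
  field_simp
  rw [add_comm, Real.sin_sq_add_cos_sq, mul_one]

end Aux

section Comp
open Set Topology Filter

private lemma comp_eps (T M0 : ℝ) (hT : 0 < T) (hM0 : 0 < M0) (u0 : ℝ → ℝ)
    (hu0 : ∀ x ∈ Set.Icc (-1 : ℝ) 1, 1 ≤ u0 x ∧ u0 x ≤ M0)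
    (u : ℝ → ℝ → ℝ) (hu : IsClassicalSolB u u0 T)
    (c : ℝ) (hc0 : 0 < c) (hcπ : c < π / 2)
    (hbig : Real.tan c > -(1 / c) * Real.log (Real.cos (c * 1)) + (π / 2) * T + M0)
    (ε : ℝ) (hε0 : 0 < ε) (hεT : ε * (T + 1) ≤ (π / 2 - c) * T) :
    ∀ x ∈ Set.Icc (-1 : ℝ) 1, ∀ t ∈ Set.Icc (0 : ℝ) T,
      u x t < -(1 / c) * Real.log (Real.cos (c * x)) + (c + ε) * t + M0 + ε := by
  set Φ : ℝ → ℝ := fun x => -(1 / c) * Real.log (Real.cos (c * x)) with hΦdef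
  -- basic facts about Φ
  have hcospos : ∀ x ∈ Set.Icc (-1 : ℝ) 1, 0 < Real.cos (c * x) := by
    intro x hx
    apply Real.cos_pos_of_mem_Ioo
    have h1 : |c * x| ≤ c := by
      rw [abs_mul, abs_of_pos hc0]
      nlinarith [abs_le.2 ⟨hx.1, hx.2⟩, (abs_nonneg x)]
    constructor
    · nlinarith [abs_le.1 h1]
    · nlinarith [abs_le.1 h1]
  have hΦd : ∀ x ∈ Set.Icc (-1 : ℝ) 1, HasDerivAt Φ (Real.tan (c * x)) x := fun x hx =>
    phi_hasDerivAt hc0.ne' (hcospos x hx).ne'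
  have hΦcont : ContinuousOn Φ (Set.Icc (-1 : ℝ) 1) := fun x hx =>
    (hΦd x hx).continuousAt.continuousWithinAt
  have hΦnonneg : ∀ x ∈ Set.Icc (-1 : ℝ) 1, 0 ≤ Φ x := by
    intro x hx
    have h1 : Real.log (Real.cos (c * x)) ≤ 0 :=
      Real.log_nonpos (hcospos x hx).le (Real.cos_le_one _)
    have h2 : 0 < 1 / c := by positivity
    show 0 ≤ -(1 / c) * Real.log (Real.cos (c * x))
    nlinarith [mul_nonneg h2.le (neg_nonneg.2 h1)]
  have hΦsym : Φ (-1) = Φ 1 := by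
    simp only [hΦdef]
    rw [mul_neg_one, ← Real.cos_neg (c * 1)]
    norm_num
  have hbig' : Real.tan c > Φ 1 + (π / 2) * T + M0 := hbig
  have hΦ1lt : Φ 1 + (c + ε) * T + M0 + ε < Real.tan c := by
    have h1 : (c + ε) * T = c * T + ε * T := by ring
    have h2 : ε * (T + 1) = ε * T + ε := by ring
    have h3 : (π / 2 - c) * T = (π / 2) * T - c * T := by ring
    linarith
  -- the comparison function
  set g : ℝ × ℝ → ℝ := fun p => u p.1 p.2 - (Φ p.1 + ((c + ε) * p.2 + M0 + ε)) with hgdef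
  set R : Set (ℝ × ℝ) := Set.Icc (-1 : ℝ) 1 ×ˢ Set.Icc (0 : ℝ) T with hRdef
  have hgcont : ContinuousOn g R := by
    apply hu.1.sub
    apply ContinuousOn.add
    · exact hΦcont.comp continuous_fst.continuousOn (fun p hp => hp.1)
    · exact (((continuous_const.mul continuous_snd).add continuous_const).add continuous_const).continuousOn
  by_contra hcon
  push_neg at hcon
  obtain ⟨x₀, hx₀, t₀, ht₀, hle₀⟩ := hcon
  have hKne : (R ∩ g ⁻¹' Set.Ici 0).Nonempty := by
    refine ⟨(x₀, t₀), ⟨hx₀, ht₀⟩, ?_⟩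
    have heq : g (x₀, t₀) = u x₀ t₀ - (-(1 / c) * Real.log (Real.cos (c * x₀)) + ((c + ε) * t₀ + M0 + ε)) := rfl
    simp only [Set.mem_preimage, Set.mem_Ici, heq]
    linarith
  have hKcl : IsClosed (R ∩ g ⁻¹' Set.Ici 0) :=
    hgcont.preimage_isClosed_of_isClosed (isClosed_Icc.prod isClosed_Icc) isClosed_Ici
  have hKcomp : IsCompact (R ∩ g ⁻¹' Set.Ici 0) :=
    (isCompact_Icc.prod isCompact_Icc).of_isClosed_subset hKcl Set.inter_subset_left
  set A : Set ℝ := Prod.snd '' (R ∩ g ⁻¹' Set.Ici 0) with hAdef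
  have hAcomp : IsCompact A := hKcomp.image continuous_snd
  have hAne : A.Nonempty := hKne.image _
  obtain ⟨p₁, hp₁K, hp₁t⟩ := hAcomp.sInf_mem hAne
  obtain ⟨x₁, t₁⟩ := p₁
  have hx₁ : x₁ ∈ Set.Icc (-1 : ℝ) 1 := hp₁K.1.1
  have ht₁ : t₁ ∈ Set.Icc (0 : ℝ) T := hp₁K.1.2
  have hg₁ : 0 ≤ g (x₁, t₁) := hp₁K.2
  -- g < 0 strictly before t₁
  have hlow : ∀ t, 0 ≤ t → t < t₁ → ∀ x ∈ Set.Icc (-1 : ℝ) 1, g (x, t) < 0 := by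
    intro t ht0 htt₁ x hx
    by_contra hge
    push_neg at hge
    have htA : t ∈ A := ⟨(x, t), ⟨⟨hx, ⟨ht0, le_trans htt₁.le ht₁.2⟩⟩, hge⟩, rfl⟩
    have := csInf_le hAcomp.bddBelow htA
    have hp₁t' : t₁ = sInf A := hp₁t
    linarith
  -- t₁ > 0
  have ht₁pos : 0 < t₁ := by
    rcases lt_or_eq_of_le ht₁.1 with h | h
    · exact h
    · exfalso
      subst h
      have hinit := hu.2.2.2.2 x₁ hx₁
      have heq : g (x₁, 0) = u0 x₁ - (Φ x₁ + ((c + ε) * 0 + M0 + ε)) := by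
        show u x₁ 0 - _ = _
        rw [hinit]
      nlinarith [hg₁, (hu0 x₁ hx₁).2, hΦnonneg x₁ hx₁, heq]
  have ht₁Ioc : t₁ ∈ Set.Ioc (0 : ℝ) T := ⟨ht₁pos, ht₁.2⟩
  -- at time t₁, g ≤ 0 everywhere
  have hle : ∀ x ∈ Set.Icc (-1 : ℝ) 1, g (x, t₁) ≤ 0 := by
    intro x hx
    have hmaps : Set.MapsTo (fun t : ℝ => (x, t)) (Set.Icc 0 T) R := fun t ht => ⟨hx, ht⟩
    have hc2 : Continuous (fun t : ℝ => ((x, t) : ℝ × ℝ)) := continuous_const.prodMk continuous_id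
    have hcont : ContinuousWithinAt (fun t : ℝ => g (x, t)) (Set.Icc 0 T) t₁ :=
      (hgcont.comp hc2.continuousOn hmaps) t₁ ht₁
    have hsub : Set.Ioo (0 : ℝ) t₁ ⊆ Set.Icc 0 T := fun s hs =>
      ⟨hs.1.le, le_trans hs.2.le ht₁.2⟩
    have htends : Filter.Tendsto (fun t : ℝ => g (x, t)) (𝓝[Set.Ioo (0 : ℝ) t₁] t₁)
        (𝓝 (g (x, t₁))) := (hcont.mono hsub).tendsto
    haveI : (𝓝[Set.Ioo (0 : ℝ) t₁] t₁).NeBot := by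
      rw [nhdsWithin_Ioo_eq_nhdsLT ht₁pos]; infer_instance
    refine le_of_tendsto htends ?_
    filter_upwards [self_mem_nhdsWithin] with s hs
    exact (hlow s hs.1.le hs.2 x hx).le
  have hg₁0 : g (x₁, t₁) = 0 := le_antisymm (hle x₁ hx₁) hg₁
  -- spatial section and its derivative
  set G : ℝ → ℝ := fun y => u y t₁ - (Φ y + ((c + ε) * t₁ + M0 + ε)) with hGdef
  set F : ℝ → ℝ := fun y => ux u y t₁ - Real.tan (c * y) with hFdef
  have hGg : ∀ y, G y = g (y, t₁) := fun y => rfl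
  have hGcont : ContinuousOn G (Set.Icc (-1 : ℝ) 1) := by
    have hmaps : Set.MapsTo (fun y : ℝ => ((y, t₁) : ℝ × ℝ)) (Set.Icc (-1 : ℝ) 1) R :=
      fun y hy => ⟨hy, ht₁⟩
    exact hgcont.comp (continuous_id.prodMk continuous_const).continuousOn hmaps
  have hFcont : ContinuousOn F (Set.Icc (-1 : ℝ) 1) := by
    apply ContinuousOn.sub
    · have hmaps : Set.MapsTo (fun y : ℝ => ((y, t₁) : ℝ × ℝ)) (Set.Icc (-1 : ℝ) 1) R :=
        fun y hy => ⟨hy, ht₁⟩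
      exact hu.2.1.comp (continuous_id.prodMk continuous_const).continuousOn hmaps
    · exact fun x hx => (tanc_hasDerivAt (hcospos x hx).ne').continuousAt.continuousWithinAt
  have hGd : ∀ y ∈ Set.Ioo (-1 : ℝ) 1, HasDerivAt G (F y) y := by
    intro y hy
    have hdiff := (hu.2.2.1 t₁ ht₁Ioc y hy).1
    have h1 : HasDerivAt (fun z => u z t₁) (ux u y t₁) y := hdiff.hasDerivAt
    exact h1.sub (((hΦd y (Set.Ioo_subset_Icc_self hy))).add_const _)
  have hGle : ∀ y ∈ Set.Icc (-1 : ℝ) 1, G y ≤ 0 := fun y hy => hle y hy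
  have hGx₁ : G x₁ = 0 := hg₁0
  rcases eq_or_lt_of_le hx₁.2 with hxr | hxr
  · -- case x₁ = 1
    subst hxr
    have hbc := (hu.2.2.2.1 t₁ ht₁Ioc).1
    have hval : u 1 t₁ = Φ 1 + ((c + ε) * t₁ + M0 + ε) := by
      have heq : G 1 = u 1 t₁ - (Φ 1 + ((c + ε) * t₁ + M0 + ε)) := rfl
      rw [heq] at hGx₁; linarith
    have hult : u 1 t₁ < Real.tan c := by
      have h1 : (c + ε) * t₁ ≤ (c + ε) * T :=
        mul_le_mul_of_nonneg_left ht₁.2 (by linarith)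
      linarith [hΦ1lt]
    have hF1 : 0 ≤ F 1 := by
      by_contra hneg
      push_neg at hneg
      have h1mem : (1 : ℝ) ∈ Set.Icc (-1 : ℝ) 1 := by norm_num
      have hev : ∀ᶠ y in 𝓝[Set.Ioo (-1 : ℝ) 1] 1, F y < 0 := by
        have h2 := ((hFcont 1 h1mem).mono Set.Ioo_subset_Icc_self).tendsto
        exact h2.eventually (eventually_lt_nhds hneg)
      rw [nhdsWithin_Ioo_eq_nhdsLT (by norm_num : (-1:ℝ) < 1)] at hev
      obtain ⟨l, hl, hIoo⟩ := mem_nhdsLT_iff_exists_Ioo_subset.1 hev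
      have hb1 : max l 0 < 1 := max_lt hl (by norm_num)
      have hbm : max l 0 ∈ Set.Icc (-1:ℝ) 1 :=
        ⟨le_trans (by norm_num) (le_max_right l 0), hb1.le⟩
      have hanti : StrictAntiOn G (Set.Icc (max l 0) 1) := by
        apply strictAntiOn_of_deriv_neg (convex_Icc _ 1)
        · exact hGcont.mono (Set.Icc_subset_Icc hbm.1 le_rfl)
        · intro y hy
          rw [interior_Icc] at hy
          have hyI : y ∈ Set.Ioo (-1:ℝ) 1 :=
            ⟨lt_of_le_of_lt (le_trans (by norm_num) (le_max_right l 0)) hy.1, hy.2⟩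
          rw [(hGd y hyI).deriv]
          exact hIoo ⟨lt_of_le_of_lt (le_max_left l 0) hy.1, hy.2⟩
      have h1 : G 1 < G (max l 0) :=
        hanti ⟨le_rfl, hb1.le⟩ ⟨hb1.le.trans le_rfl |>.trans le_rfl, le_rfl⟩ hb1
      have h2 := hGle (max l 0) hbm
      rw [hGx₁] at h1
      linarith
    have hFeq : F 1 = ux u 1 t₁ - Real.tan (c * 1) := rfl
    rw [hFeq, mul_one, hbc] at hF1
    linarith
  rcases eq_or_lt_of_le hx₁.1 with hxl | hxl
  · -- case x₁ = -1
    subst hxl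
    have hbc := (hu.2.2.2.1 t₁ ht₁Ioc).2
    have hval : u (-1) t₁ = Φ (-1) + ((c + ε) * t₁ + M0 + ε) := by
      have heq : G (-1) = u (-1) t₁ - (Φ (-1) + ((c + ε) * t₁ + M0 + ε)) := rfl
      rw [heq] at hGx₁; linarith
    have hult : u (-1) t₁ < Real.tan c := by
      have h1 : (c + ε) * t₁ ≤ (c + ε) * T :=
        mul_le_mul_of_nonneg_left ht₁.2 (by linarith)
      rw [hΦsym] at hval
      linarith [hΦ1lt]
    have hF1 : F (-1) ≤ 0 := by
      by_contra hneg
      push_neg at hneg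
      have h1mem : (-1 : ℝ) ∈ Set.Icc (-1 : ℝ) 1 := by norm_num
      have hev : ∀ᶠ y in 𝓝[Set.Ioo (-1 : ℝ) 1] (-1), 0 < F y := by
        have h2 := ((hFcont (-1) h1mem).mono Set.Ioo_subset_Icc_self).tendsto
        exact h2.eventually (eventually_gt_nhds hneg)
      rw [nhdsWithin_Ioo_eq_nhdsGT (by norm_num : (-1:ℝ) < 1)] at hev
      obtain ⟨r, hr, hIoo⟩ := mem_nhdsGT_iff_exists_Ioo_subset.1 hev
      have hb1 : (-1:ℝ) < min r 0 := lt_min hr (by norm_num)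
      have hbm : min r 0 ∈ Set.Icc (-1:ℝ) 1 :=
        ⟨hb1.le, le_trans (min_le_right r 0) (by norm_num)⟩
      have hmono : StrictMonoOn G (Set.Icc (-1:ℝ) (min r 0)) := by
        apply strictMonoOn_of_deriv_pos (convex_Icc _ _)
        · exact hGcont.mono (Set.Icc_subset_Icc le_rfl hbm.2)
        · intro y hy
          rw [interior_Icc] at hy
          have hyI : y ∈ Set.Ioo (-1:ℝ) 1 :=
            ⟨hy.1, lt_of_lt_of_le hy.2 (le_trans (min_le_right r 0) (by norm_num))⟩
          rw [(hGd y hyI).deriv]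
          exact hIoo ⟨hy.1, lt_of_lt_of_le hy.2 (min_le_left r 0)⟩
      have h1 : G (-1) < G (min r 0) :=
        hmono ⟨le_rfl, hb1.le⟩ ⟨hb1.le, le_rfl⟩ hb1
      have h2 := hGle (min r 0) hbm
      rw [hGx₁] at h1
      linarith
    have hFeq : F (-1) = ux u (-1) t₁ - Real.tan (c * (-1)) := rfl
    have htan : Real.tan (c * (-1)) = - Real.tan c := by
      rw [mul_neg_one, Real.tan_neg]
    rw [hFeq, htan, hbc] at hF1
    linarith
  · -- interior case
    have hx₁I : x₁ ∈ Set.Ioo (-1:ℝ) 1 := ⟨hxl, hxr⟩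
    obtain ⟨hdx, hdxx, hdt, hpde⟩ := hu.2.2.1 t₁ ht₁Ioc x₁ hx₁I
    have hmax : IsLocalMax G x₁ := by
      refine Filter.eventually_of_mem (Ioo_mem_nhds hxl hxr) fun y hy => ?_
      rw [hGx₁]
      exact hGle y (Set.Ioo_subset_Icc_self hy)
    have hFx₁ : F x₁ = 0 := by
      rw [← (hGd x₁ hx₁I).deriv]
      exact hmax.deriv_eq_zero
    have huxeq : ux u x₁ t₁ = Real.tan (c * x₁) := by
      have heq : F x₁ = ux u x₁ t₁ - Real.tan (c * x₁) := rfl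
      rw [heq] at hFx₁; linarith
    have hFd : HasDerivAt F (uxx u x₁ t₁ - c * (1 + Real.tan (c * x₁) ^ 2)) x₁ := by
      have h1 : HasDerivAt (fun y => ux u y t₁) (uxx u x₁ t₁) x₁ := hdxx.hasDerivAt
      exact h1.sub (tanc_hasDerivAt (hcospos x₁ hx₁).ne')
    have huxx : uxx u x₁ t₁ ≤ c * (1 + Real.tan (c * x₁) ^ 2) := by
      by_contra hgt
      push_neg at hgt
      have hD : 0 < uxx u x₁ t₁ - c * (1 + Real.tan (c * x₁) ^ 2) := by linarith
      have hslope := hasDerivAt_iff_tendsto_slope.1 hFd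
      have hslope' : Filter.Tendsto (slope F x₁) (𝓝[>] x₁)
          (𝓝 (uxx u x₁ t₁ - c * (1 + Real.tan (c * x₁) ^ 2))) :=
        hslope.mono_left (nhdsWithin_mono x₁ fun y hy =>
          Set.mem_compl_singleton_iff.2 (ne_of_gt hy))
      have hev1 : ∀ᶠ y in 𝓝[>] x₁, 0 < slope F x₁ y :=
        hslope'.eventually (eventually_gt_nhds hD)
      obtain ⟨r, hr, hIoo⟩ := mem_nhdsGT_iff_exists_Ioo_subset.1 hev1
      set b : ℝ := (x₁ + min r 1) / 2 with hbdef
      have hminr : x₁ < min r 1 := lt_min hr hxr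
      have hxb : x₁ < b := by rw [hbdef]; linarith
      have hbmin : b < min r 1 := by rw [hbdef]; linarith
      have hbr : b < r := lt_of_lt_of_le hbmin (min_le_left r 1)
      have hb1 : b < 1 := lt_of_lt_of_le hbmin (min_le_right r 1)
      have hbm : b ∈ Set.Icc (-1:ℝ) 1 := ⟨le_trans hx₁.1 hxb.le, hb1.le⟩
      have hmono : StrictMonoOn G (Set.Icc x₁ b) := by
        apply strictMonoOn_of_deriv_pos (convex_Icc _ _)
        · exact hGcont.mono (Set.Icc_subset_Icc hx₁.1 hb1.le)
        · intro y hy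
          rw [interior_Icc] at hy
          have hyI : y ∈ Set.Ioo (-1:ℝ) 1 := ⟨lt_trans hxl hy.1, lt_trans hy.2 hb1⟩
          rw [(hGd y hyI).deriv]
          have hsl : 0 < slope F x₁ y := hIoo ⟨hy.1, lt_trans hy.2 hbr⟩
          rw [slope_def_field, hFx₁] at hsl
          have hy0 : 0 < y - x₁ := sub_pos.2 hy.1
          rcases div_pos_iff.1 hsl with ⟨ha, _⟩ | ⟨_, hb'⟩
          · linarith
          · linarith
      have h1 : G x₁ < G b := hmono ⟨le_rfl, hxb.le⟩ ⟨hxb.le, le_rfl⟩ hxb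
      have h2 := hGle b hbm
      rw [hGx₁] at h1
      linarith
    have hut_le : ut u x₁ t₁ ≤ c := by
      rw [hpde, huxeq]
      rw [div_le_iff₀ (by positivity : (0:ℝ) < 1 + Real.tan (c * x₁) ^ 2)]
      linarith [huxx]
    set H : ℝ → ℝ := fun s => u x₁ s - (Φ x₁ + ((c + ε) * s + M0 + ε)) with hHdef
    have hlin : HasDerivAt (fun s : ℝ => Φ x₁ + ((c + ε) * s + M0 + ε)) (c + ε) t₁ := by
      have h1 : HasDerivAt (fun s : ℝ => (c + ε) * s) (c + ε) t₁ := by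
        simpa using (hasDerivAt_id t₁).const_mul (c + ε)
      simpa using ((h1.add_const M0).add_const ε).const_add (Φ x₁)
    have hHd : HasDerivAt H (ut u x₁ t₁ - (c + ε)) t₁ := by
      have h1 : HasDerivAt (fun s => u x₁ s) (ut u x₁ t₁) t₁ := hdt.hasDerivAt
      exact h1.sub hlin
    have hslopet := hasDerivAt_iff_tendsto_slope.1 hHd
    have hslopet' : Filter.Tendsto (slope H t₁) (𝓝[Set.Ioo (0:ℝ) t₁] t₁)
        (𝓝 (ut u x₁ t₁ - (c + ε))) :=
      hslopet.mono_left (nhdsWithin_mono t₁ fun s hs =>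
        Set.mem_compl_singleton_iff.2 hs.2.ne)
    haveI : (𝓝[Set.Ioo (0:ℝ) t₁] t₁).NeBot := by
      rw [nhdsWithin_Ioo_eq_nhdsLT ht₁pos]; infer_instance
    have hge : 0 ≤ ut u x₁ t₁ - (c + ε) := by
      refine ge_of_tendsto hslopet' ?_
      filter_upwards [self_mem_nhdsWithin] with s hs
      have h1 : H s < 0 := hlow s hs.1.le hs.2 x₁ hx₁
      have h2 : H t₁ = 0 := hg₁0
      rw [slope_def_field, h2]
      apply div_nonneg_iff.2
      right
      constructor
      · linarith
      · linarith [hs.2]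
    linarith

end Comp

/-- upper bound. If `1 ≤ u0 ≤ M0` and `h_T > φ(1;h_T) + (π/2)T + M0`,
where `φ(x;h) = -(1/arctan h)·ln(cos((arctan h)x))`, then
`u(x,t) ≤ φ(x;h_T) + (arctan h_T)t + M0 ≤ φ(1;h_T) + M0 + (π/2)T` on `[-1,1] × [0,T]`. -/
theorem stmt_5 (T M0 : ℝ) (hT : 0 < T) (hM0 : 0 < M0) (u0 : ℝ → ℝ)
    (hu0 : ∀ x ∈ Set.Icc (-1 : ℝ) 1, 1 ≤ u0 x ∧ u0 x ≤ M0)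
    (u : ℝ → ℝ → ℝ) (hu : IsClassicalSolB u u0 T)
    (φ : ℝ → ℝ → ℝ)
    (hφ : ∀ x h : ℝ, φ x h = -(1 / Real.arctan h) * Real.log (Real.cos (Real.arctan h * x)))
    (hT' : ℝ) (hhT : 0 < hT')
    (hbig : hT' > φ 1 hT' + (π / 2) * T + M0) :
    ∀ x ∈ Set.Icc (-1 : ℝ) 1, ∀ t ∈ Set.Icc (0 : ℝ) T,
      u x t ≤ φ x hT' + Real.arctan hT' * t + M0 ∧
      φ x hT' + Real.arctan hT' * t + M0 ≤ φ 1 hT' + M0 + (π / 2) * T := by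
  intro x hx t ht
  set c : ℝ := Real.arctan hT' with hcdef
  have hc0 : 0 < c := by rw [hcdef, ← Real.arctan_zero]; exact Real.arctan_strictMono hhT
  have hcπ : c < π / 2 := Real.arctan_lt_pi_div_two hT'
  have hbig2 : Real.tan c > -(1 / c) * Real.log (Real.cos (c * 1)) + (π / 2) * T + M0 := by
    rw [hcdef, Real.tan_arctan]
    rw [hφ 1 hT'] at hbig
    exact hbig
  -- first inequality
  have key : u x t ≤ -(1 / c) * Real.log (Real.cos (c * x)) + c * t + M0 := by
    refine le_of_forall_pos_le_add fun δ hδ => ?_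
    have hπc : 0 < π / 2 - c := by linarith
    set ε : ℝ := min (δ / (T + 1)) ((π / 2 - c) * T / (T + 1)) with hεdef
    have hε0 : 0 < ε := lt_min (by positivity) (by positivity)
    have hεT : ε * (T + 1) ≤ (π / 2 - c) * T := by
      have h1 : ε ≤ (π / 2 - c) * T / (T + 1) := min_le_right _ _
      exact (le_div_iff₀ (by linarith)).1 h1
    have hlt := comp_eps T M0 hT hM0 u0 hu0 u hu c hc0 hcπ hbig2 ε hε0 hεT x hx t ht
    have h2 : ε * t ≤ ε * T := mul_le_mul_of_nonneg_left ht.2 hε0.le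
    have h3 : ε * (T + 1) ≤ δ := by
      have h4 : ε ≤ δ / (T + 1) := min_le_left _ _
      exact (le_div_iff₀ (by linarith)).1 h4
    have h5 : (c + ε) * t = c * t + ε * t := by ring
    have h6 : ε * (T + 1) = ε * T + ε := by ring
    linarith
  have hcos1 : 0 < Real.cos (c * 1) := by
    apply Real.cos_pos_of_mem_Ioo
    constructor
    · rw [mul_one]; nlinarith [Real.pi_pos]
    · rw [mul_one]; exact hcπ
  have habs : |c * x| ≤ c * 1 := by
    rw [abs_mul, abs_of_pos hc0, mul_one]
    nlinarith [abs_le.2 ⟨hx.1, hx.2⟩, abs_nonneg x]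
  have hcoscos : Real.cos (c * 1) ≤ Real.cos (c * x) := by
    rw [← Real.cos_abs (c * x)]
    apply Real.cos_le_cos_of_nonneg_of_le_pi (abs_nonneg _) ?_ habs
    rw [mul_one]
    nlinarith [Real.pi_pos]
  have hlog : Real.log (Real.cos (c * 1)) ≤ Real.log (Real.cos (c * x)) :=
    Real.log_le_log hcos1 hcoscos
  have hΦxle : -(1 / c) * Real.log (Real.cos (c * x)) ≤ -(1 / c) * Real.log (Real.cos (c * 1)) := by
    apply mul_le_mul_of_nonpos_left hlog
    have : 0 < 1 / c := by positivity
    linarith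
  have hct : c * t ≤ (π / 2) * T := by
    have h1 : c * t ≤ c * T := mul_le_mul_of_nonneg_left ht.2 hc0.le
    have h2 : c * T ≤ (π / 2) * T := mul_le_mul_of_nonneg_right hcπ.le hT.le
    linarith
  rw [hφ x hT', hφ 1 hT']
  exact ⟨key, by linarith⟩
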